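/- With boundary conditions and the Gauss–Green formula, Δ_{ν,μ} is non-positive: for every f in the domain of Δ_{ν,μ} satisfying the Robin boundary conditions with γ ∈ [0,π/2]², one has ∫ (Δ_{ν,μ} f) f dν ≤ 0. -/

import Mathlib

open MeasureTheory Set Filter

/-- Distribution function of a measure on `[0,1]`. -/
noncomputable def Fdist (μ : Measure ℝ) (x : ℝ) : ℝ := (μ (Set.Icc 0 x)).toReal

/-- Pseudo-inverse of the distribution function. -/
noncomputable def Finv (μ : Measure ℝ) (x : ℝ) : ℝ :=
  sInf {y ∈ Set.Icc (0:ℝ) 1 | x ≤ Fdist μ y}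

/-- Topological support of a measure. -/
def msupport (μ : Measure ℝ) : Set ℝ := {x | ∀ U : Set ℝ, IsOpen U → x ∈ U → 0 < μ U}

lemma aux_sign {a b θ : ℝ} (hθ : θ ∈ Set.Icc 0 (Real.pi/2))
    (h : a * Real.cos θ - b * Real.sin θ = 0) : 0 ≤ a * b := by
  have hs : 0 ≤ Real.sin θ :=
    Real.sin_nonneg_of_nonneg_of_le_pi hθ.1 (le_trans hθ.2 (by linarith [Real.pi_pos]))
  have hc : 0 ≤ Real.cos θ :=
    Real.cos_nonneg_of_mem_Icc ⟨by linarith [hθ.1, Real.pi_pos], hθ.2⟩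
  have heq : a * Real.cos θ = b * Real.sin θ := by linarith
  by_cases h0 : Real.sin θ * Real.cos θ = 0
  · rcases mul_eq_zero.1 h0 with hs0 | hc0
    · have hc1 : Real.cos θ ≠ 0 := by
        intro hcz; nlinarith [Real.sin_sq_add_cos_sq θ]
      have ha : a = 0 := by
        have : a * Real.cos θ = 0 := by rw [heq, hs0, mul_zero]
        rcases mul_eq_zero.1 this with h' | h'
        · exact h'
        · exact absurd h' hc1
      simp [ha]
    · have hs1 : Real.sin θ ≠ 0 := by
        intro hsz; nlinarith [Real.sin_sq_add_cos_sq θ]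
      have hb : b = 0 := by
        have : b * Real.sin θ = 0 := by rw [← heq, hc0, mul_zero]
        rcases mul_eq_zero.1 this with h' | h'
        · exact h'
        · exact absurd h' hs1
      simp [hb]
  · have hpos : 0 < Real.sin θ * Real.cos θ :=
      lt_of_le_of_ne (mul_nonneg hs hc) (Ne.symm h0)
    have h2 : a * b * (Real.sin θ * Real.cos θ) = (a * Real.cos θ) * (b * Real.sin θ) := by ring
    rw [heq] at h2
    nlinarith [sq_nonneg (b * Real.sin θ), hpos, h2]

theorem stmt_11 (μ ν : Measure ℝ) [IsProbabilityMeasure μ] [IsProbabilityMeasure ν] [NullSingletonClass μ]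
    (hμc : μ (Set.Icc (0:ℝ) 1)ᶜ = 0) (hνc : ν (Set.Icc (0:ℝ) 1)ᶜ = 0)
    (hν0 : ν {(0:ℝ)} = 0) (hν1 : ν {(1:ℝ)} = 0)
    (hsupp : msupport ν ⊆ msupport μ)
    (f fΔ : ℝ → ℝ) (bf : ℝ) (hfΔ : Continuous fΔ)
    (hf : ∀ x ∈ Set.Icc (0:ℝ) 1,
      f x = f 0 + bf * Fdist μ x + ∫ y in Set.Icc 0 x, (Fdist μ x - Fdist μ y) * fΔ y ∂ν)
    (α β : ℝ) (hα : α ∈ Set.Icc 0 (Real.pi/2)) (hβ : β ∈ Set.Icc 0 (Real.pi/2))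
    (hfbc0 : f 0 * Real.cos α - bf * Real.sin α = 0)
    (hfbc1 : f 1 * Real.cos β + (bf + ∫ y in Set.Icc (0:ℝ) 1, fΔ y ∂ν) * Real.sin β = 0) :
    ∫ y in Set.Icc (0:ℝ) 1, fΔ y * f y ∂ν ≤ 0 := by
  classical
  set F := Fdist μ with hFdef
  have hμ1 : μ (Icc (0:ℝ) 1) = 1 := by
    have h := measure_add_measure_compl (μ := μ) (measurableSet_Icc (a := (0:ℝ)) (b := 1))
    rw [hμc, add_zero, measure_univ] at h; exact h
  have hν1' : ν (Icc (0:ℝ) 1) = 1 := by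
    have h := measure_add_measure_compl (μ := ν) (measurableSet_Icc (a := (0:ℝ)) (b := 1))
    rw [hνc, add_zero, measure_univ] at h; exact h
  have hF_mono : Monotone F := fun a b hab =>
    ENNReal.toReal_mono (measure_ne_top μ _) (measure_mono (Icc_subset_Icc_right hab))
  have hF0 : F 0 = 0 := by simp [hFdef, Fdist, Icc_self]
  have hF1 : F 1 = 1 := by simp [hFdef, Fdist, hμ1]
  have hFnn : ∀ x, 0 ≤ F x := fun x => ENNReal.toReal_nonneg
  have hFle : ∀ x, F x ≤ 1 := fun x => by
    have h1 : (μ (Icc 0 x)).toReal ≤ (μ univ).toReal :=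
      ENNReal.toReal_mono (measure_ne_top μ _) (measure_mono (subset_univ _))
    exact (by simpa [measure_univ] using h1 : (μ (Icc 0 x)).toReal ≤ 1)
  set ρ := ν.restrict (Icc (0:ℝ) 1) with hρdef
  set m := μ.restrict (Icc (0:ℝ) 1) with hmdef
  haveI hρP : IsProbabilityMeasure ρ := ⟨by rw [hρdef, Measure.restrict_apply_univ, hν1']⟩
  haveI hmP : IsProbabilityMeasure m := ⟨by rw [hmdef, Measure.restrict_apply_univ, hμ1]⟩
  have hρae : ∀ᵐ y ∂ρ, y ∈ Icc (0:ℝ) 1 := ae_restrict_mem measurableSet_Icc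
  obtain ⟨C, hC⟩ := isCompact_Icc.exists_bound_of_continuousOn
    (hfΔ.continuousOn (s := Icc (0:ℝ) 1))
  have hC0 : 0 ≤ C := le_trans (norm_nonneg _) (hC 0 ⟨le_rfl, zero_le_one⟩)
  have hmIci : ∀ z ∈ Icc (0:ℝ) 1, (m (Ici z)).toReal = 1 - F z := by
    intro z hz
    have h1 : m (Ici z) = μ (Icc z 1) := by
      rw [hmdef, Measure.restrict_apply measurableSet_Ici]
      congr 1; ext x
      simp only [mem_inter_iff, mem_Ici, mem_Icc]
      exact ⟨fun ⟨h, _, h2⟩ => ⟨h, h2⟩, fun ⟨h, h2⟩ => ⟨h, le_trans hz.1 h, h2⟩⟩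
    have hdisj : Disjoint (Ico (0:ℝ) z) (Icc z 1) := by
      rw [Set.disjoint_left]; rintro x ⟨_, hx⟩ ⟨hx', _⟩; exact absurd hx' (not_le.2 hx)
    have h2 : μ (Ico 0 z) + μ (Icc z 1) = 1 := by
      rw [← measure_union hdisj measurableSet_Icc, Ico_union_Icc_eq_Icc hz.1 hz.2, hμ1]
    have h3 : (μ (Ico 0 z)).toReal = F z := by
      rw [measure_congr (Ico_ae_eq_Icc (μ := μ))]; rfl
    have h4 := congrArg ENNReal.toReal h2
    rw [ENNReal.toReal_add (measure_ne_top μ _) (measure_ne_top μ _), ENNReal.toReal_one] at h4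
    rw [h1]; linarith
  have hS : MeasurableSet {p : ℝ × ℝ | p.2 ∈ Icc 0 p.1} := by
    have h : {p : ℝ × ℝ | p.2 ∈ Icc 0 p.1}
        = {p : ℝ × ℝ | (0:ℝ) ≤ p.2} ∩ {p : ℝ × ℝ | p.2 ≤ p.1} := by
      ext p; simp [mem_Icc]
    rw [h]
    exact (measurableSet_le measurable_const measurable_snd).inter
      (measurableSet_le measurable_snd measurable_fst)
  have hSM : ∀ g : ℝ → ℝ, Measurable g →
      StronglyMeasurable (fun p : ℝ × ℝ => (Icc 0 p.1).indicator g p.2) := by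
    intro g hg
    have heq : (fun p : ℝ × ℝ => (Icc 0 p.1).indicator g p.2)
        = ({p : ℝ × ℝ | p.2 ∈ Icc 0 p.1}).indicator (fun p => g p.2) := by
      ext p
      by_cases h : p.2 ∈ Icc 0 p.1
      · rw [Set.indicator_of_mem h, Set.indicator_of_mem (by exact h)]
      · rw [Set.indicator_of_notMem h, Set.indicator_of_notMem (by exact h)]
    rw [heq]
    exact ((hg.comp measurable_snd).indicator hS).stronglyMeasurable
  have hFmeas : Measurable F := hF_mono.measurable
  have hfm : Measurable fΔ := hfΔ.measurable
  have hFfm : Measurable (fun z => F z * fΔ z) := hFmeas.mul hfm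
  set H : ℝ → ℝ := fun x => ∫ z, (Icc 0 x).indicator fΔ z ∂ρ with hHdef
  set L : ℝ → ℝ := fun x => ∫ z, (Icc 0 x).indicator (fun z => F z * fΔ z) z ∂ρ with hLdef
  have hHapp : ∀ x, H x = ∫ z, (Icc 0 x).indicator fΔ z ∂ρ := fun x => by simp only [hHdef]
  have hLapp : ∀ x, L x = ∫ z, (Icc 0 x).indicator (fun z => F z * fΔ z) z ∂ρ := fun x => by
    simp only [hLdef]
  have hHSM : StronglyMeasurable H := by
    rw [hHdef]; exact (hSM fΔ hfm).integral_prod_right'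
  have hLSM : StronglyMeasurable L := by
    rw [hLdef]; exact (hSM _ hFfm).integral_prod_right'
  have hfb : ∀ᵐ z ∂ρ, ‖fΔ z‖ ≤ C := hρae.mono fun z hz => hC z hz
  have hFfb : ∀ᵐ z ∂ρ, ‖F z * fΔ z‖ ≤ C := hρae.mono fun z hz => by
    rw [norm_mul]
    calc ‖F z‖ * ‖fΔ z‖ ≤ 1 * C := by
          apply mul_le_mul _ (hC z hz) (norm_nonneg _) zero_le_one
          rw [Real.norm_eq_abs, abs_of_nonneg (hFnn z)]; exact hFle z
      _ = C := one_mul C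
  have hHb : ∀ x, ‖H x‖ ≤ C := fun x => by
    rw [hHapp]
    have h := norm_integral_le_of_norm_le_const (μ := ρ)
      (f := fun z => (Icc 0 x).indicator fΔ z) (C := C)
      (hfb.mono fun z hz => le_trans (norm_indicator_le_norm_self fΔ z) hz)
    simpa [measure_univ] using h
  have hLb : ∀ x, ‖L x‖ ≤ C := fun x => by
    rw [hLapp]
    have h := norm_integral_le_of_norm_le_const (μ := ρ)
      (f := fun z => (Icc 0 x).indicator (fun z => F z * fΔ z) z) (C := C)
      (hFfb.mono fun z hz => le_trans (norm_indicator_le_norm_self _ z) hz)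
    simpa [measure_univ] using h
  have hIntC : ∀ (g : ℝ → ℝ) (c : ℝ), AEStronglyMeasurable g ρ →
      (∀ᵐ z ∂ρ, ‖g z‖ ≤ c) → Integrable g ρ :=
    fun g c hgm hgb => (integrable_const c).mono' hgm hgb
  have hIfΔ : Integrable fΔ ρ := hIntC _ C hfm.aestronglyMeasurable hfb
  have hIF : Integrable (fun z => F z * fΔ z) ρ := hIntC _ C hFfm.aestronglyMeasurable hFfb
  set I := ∫ y, fΔ y ∂ρ with hIdef
  set J := ∫ y, F y * fΔ y ∂ρ with hJdef
  have hρself : ρ.restrict (Icc (0:ℝ) 1) = ρ := by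
    rw [hρdef, Measure.restrict_restrict measurableSet_Icc, inter_self]
  have hset : ∀ y ∈ Icc (0:ℝ) 1, (∫ z in Icc 0 y, (F y - F z) * fΔ z ∂ν)
      = ∫ z, (Icc 0 y).indicator (fun z => (F y - F z) * fΔ z) z ∂ρ := by
    intro y hy
    have h1 : ρ.restrict (Icc 0 y) = ν.restrict (Icc 0 y) := by
      rw [hρdef, Measure.restrict_restrict measurableSet_Icc,
        inter_eq_left.mpr (Icc_subset_Icc_right hy.2)]
    rw [← h1, integral_indicator measurableSet_Icc]
  have hKL : ∀ y, (∫ z, (Icc 0 y).indicator (fun z => (F y - F z) * fΔ z) z ∂ρ)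
      = F y * H y - L y := by
    intro y
    have h2 : ∀ z, (Icc 0 y).indicator (fun z => (F y - F z) * fΔ z) z
        = F y * (Icc 0 y).indicator fΔ z - (Icc 0 y).indicator (fun z => F z * fΔ z) z := by
      intro z
      by_cases h : z ∈ Icc (0:ℝ) y
      · rw [Set.indicator_of_mem h, Set.indicator_of_mem h, Set.indicator_of_mem h]; ring
      · rw [Set.indicator_of_notMem h, Set.indicator_of_notMem h,
          Set.indicator_of_notMem h]; ring
    simp_rw [h2]
    rw [integral_sub ((hIfΔ.indicator measurableSet_Icc).const_mul _)
      (hIF.indicator measurableSet_Icc), integral_const_mul, ← hHapp y, ← hLapp y]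
  have hD_int : Integrable (fun y => fΔ y * (F y * H y - L y)) ρ := by
    apply hIntC _ (C * (C + C))
    · exact (hfm.mul ((hFmeas.mul hHSM.measurable).sub hLSM.measurable)).aestronglyMeasurable
    · refine hρae.mono fun y hy => ?_
      rw [norm_mul]
      apply mul_le_mul (hC y hy) _ (norm_nonneg _) hC0
      refine le_trans (norm_sub_le _ _) (add_le_add ?_ (hLb y))
      rw [norm_mul]
      calc ‖F y‖ * ‖H y‖ ≤ 1 * C := by
            apply mul_le_mul _ (hHb y) (norm_nonneg _) zero_le_one
            rw [Real.norm_eq_abs, abs_of_nonneg (hFnn y)]; exact hFle y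
        _ = C := one_mul C
  set D := ∫ y, fΔ y * (F y * H y - L y) ∂ρ with hDdef
  have keyA : (∫ y, fΔ y * f y ∂ρ) = f 0 * I + bf * J + D := by
    have hcong : ∀ᵐ y ∂ρ, fΔ y * f y
        = f 0 * fΔ y + bf * (F y * fΔ y) + fΔ y * (F y * H y - L y) :=
      hρae.mono fun y hy => by rw [hf y hy, hset y hy, hKL y]; ring
    have hint1 : Integrable (fun y => f 0 * fΔ y) ρ := hIfΔ.const_mul _
    have hint2 : Integrable (fun y => bf * (F y * fΔ y)) ρ := hIF.const_mul _
    have hint3 : Integrable (fun y => f 0 * fΔ y + bf * (F y * fΔ y)) ρ := hint1.add hint2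
    rw [integral_congr_ae hcong, integral_add hint3 hD_int,
      integral_add hint1 hint2,
      integral_const_mul, integral_const_mul, ← hIdef, ← hJdef, ← hDdef]
  have hH1 : H 1 = I := by
    rw [hHapp, integral_indicator measurableSet_Icc, hρself, ← hIdef]
  have hL1 : L 1 = J := by
    rw [hLapp, integral_indicator measurableSet_Icc, hρself, ← hJdef]
  have keyB : f 1 = f 0 + bf + (I - J) := by
    have h1 := hf 1 ⟨zero_le_one, le_rfl⟩
    rw [hset 1 ⟨zero_le_one, le_rfl⟩, hKL 1, hF1, hH1, hL1] at h1
    rw [h1]; ring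
  have hρcompl : ρ (Icc (0:ℝ) 1)ᶜ = 0 := by
    rw [hρdef, Measure.restrict_apply measurableSet_Icc.compl, compl_inter_self]
    exact measure_empty
  have haeprod_snd : ∀ᵐ p : ℝ × ℝ ∂(m.prod ρ), p.2 ∈ Icc (0:ℝ) 1 := by
    rw [ae_iff]
    have h1 : {p : ℝ × ℝ | ¬ p.2 ∈ Icc 0 1} = (univ : Set ℝ) ×ˢ (Icc (0:ℝ) 1)ᶜ := by
      ext p; simp
    rw [h1, Measure.prod_prod, hρcompl, mul_zero]
  have hint_k : Integrable (fun p : ℝ × ℝ => (Icc 0 p.1).indicator fΔ p.2) (m.prod ρ) := by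
    apply (integrable_const C).mono' (hSM fΔ hfm).aestronglyMeasurable
    exact haeprod_snd.mono fun p hp => le_trans (norm_indicator_le_norm_self _ _) (hC _ hp)
  have keyI : (∫ x, H x ∂m) = I - J := by
    have hswap := integral_integral_swap
      (f := fun x z => (Icc 0 x).indicator fΔ z) (μ := m) (ν := ρ) hint_k
    have h0 : (∫ x, H x ∂m) = ∫ x, ∫ z, (Icc 0 x).indicator fΔ z ∂ρ ∂m := rfl
    rw [h0, hswap]
    have hcong : ∀ᵐ z ∂ρ, (∫ x, (Icc 0 x).indicator fΔ z ∂m) = fΔ z - F z * fΔ z :=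
      hρae.mono fun z hz => by
        have h1 : (fun x => (Icc 0 x).indicator fΔ z) = (Ici z).indicator (fun _ => fΔ z) := by
          ext x
          by_cases h : z ≤ x
          · rw [Set.indicator_of_mem (show z ∈ Icc 0 x from ⟨hz.1, h⟩),
              Set.indicator_of_mem (mem_Ici.2 h)]
          · rw [Set.indicator_of_notMem (fun hm => h hm.2),
              Set.indicator_of_notMem (by simpa using h)]
        rw [h1, integral_indicator measurableSet_Ici, setIntegral_const, smul_eq_mul, measureReal_def,
          hmIci z hz]; ring
    rw [integral_congr_ae hcong, integral_sub hIfΔ hIF, ← hIdef, ← hJdef]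
  have hIKz : ∀ z, Integrable (fun w => (Icc 0 z).indicator (fun w => (F z - F w) * fΔ w) w) ρ := by
    intro z
    apply hIntC _ C
    · exact (((measurable_const.sub hFmeas).mul hfm).indicator measurableSet_Icc).aestronglyMeasurable
    · refine hρae.mono fun w hw => le_trans (norm_indicator_le_norm_self _ _) ?_
      show ‖(F z - F w) * fΔ w‖ ≤ C
      rw [norm_mul]
      calc ‖F z - F w‖ * ‖fΔ w‖ ≤ 1 * C := by
            apply mul_le_mul _ (hC w hw) (norm_nonneg _) zero_le_one
            rw [Real.norm_eq_abs, abs_le]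
            constructor <;> [linarith [hFnn z, hFle w]; linarith [hFle z, hFnn w]]
        _ = C := one_mul C
  have hHx2 : ∀ x, (∫ z, (Icc 0 x).indicator fΔ z * H x ∂ρ) = H x ^ 2 := fun x => by
    rw [integral_mul_const, ← hHapp x, sq]
  have hint_kH : Integrable (fun p : ℝ × ℝ => (Icc 0 p.1).indicator fΔ p.2 * H p.1) (m.prod ρ) := by
    apply (integrable_const (C * C)).mono'
      ((hSM fΔ hfm).mul (hHSM.comp_measurable measurable_fst)).aestronglyMeasurable
    refine haeprod_snd.mono fun p hp => ?_
    show ‖(Icc 0 p.1).indicator fΔ p.2 * H p.1‖ ≤ C * C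
    rw [norm_mul]
    exact mul_le_mul (le_trans (norm_indicator_le_norm_self _ _) (hC _ hp)) (hHb _)
      (norm_nonneg _) hC0
  have step1 : (∫ x, H x ^ 2 ∂m) = ∫ z, ∫ x, (Icc 0 x).indicator fΔ z * H x ∂m ∂ρ := by
    simp_rw [← hHx2]
    exact integral_integral_swap hint_kH
  have step2 : ∀ᵐ z ∂ρ, (∫ x, (Icc 0 x).indicator fΔ z * H x ∂m)
      = fΔ z * (I - J) - fΔ z * (F z * H z - L z) := by
    refine hρae.mono fun z hz => ?_
    have h1 : ∀ x, (∫ w, (Icc 0 x).indicator fΔ z * (Icc 0 x).indicator fΔ w ∂ρ)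
        = (Icc 0 x).indicator fΔ z * H x := fun x => by
      rw [integral_const_mul, ← hHapp x]
    have hint2 : Integrable
        (fun p : ℝ × ℝ => (Icc 0 p.1).indicator fΔ z * (Icc 0 p.1).indicator fΔ p.2)
        (m.prod ρ) := by
      apply (integrable_const (C * C)).mono'
        ((((hSM fΔ hfm).comp_measurable (measurable_id.prodMk measurable_const)).comp_measurable
          measurable_fst).mul (hSM fΔ hfm)).aestronglyMeasurable
      refine haeprod_snd.mono fun p hp => ?_
      show ‖(Icc 0 p.1).indicator fΔ z * (Icc 0 p.1).indicator fΔ p.2‖ ≤ C * C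
      rw [norm_mul]
      exact mul_le_mul (le_trans (norm_indicator_le_norm_self _ _) (hC z hz))
        (le_trans (norm_indicator_le_norm_self _ _) (hC _ hp)) (norm_nonneg _) hC0
    simp_rw [← h1]
    rw [integral_integral_swap hint2]
    have hcong2 : ∀ᵐ w ∂ρ, (∫ x, (Icc 0 x).indicator fΔ z * (Icc 0 x).indicator fΔ w ∂m)
        = fΔ z * (fΔ w - F w * fΔ w)
          - fΔ z * (Icc 0 z).indicator (fun w => (F z - F w) * fΔ w) w := by
      refine hρae.mono fun w hw => ?_
      have h2 : (fun x => (Icc 0 x).indicator fΔ z * (Icc 0 x).indicator fΔ w)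
          = (Ici (z ⊔ w)).indicator (fun _ => fΔ z * fΔ w) := by
        ext x
        by_cases h : z ⊔ w ≤ x
        · rw [Set.indicator_of_mem (show z ∈ Icc 0 x from ⟨hz.1, le_trans le_sup_left h⟩),
            Set.indicator_of_mem (show w ∈ Icc 0 x from ⟨hw.1, le_trans le_sup_right h⟩),
            Set.indicator_of_mem (mem_Ici.2 h)]
        · rw [Set.indicator_of_notMem (show x ∉ Ici (z ⊔ w) from by simpa using h)]
          by_cases hzx : z ≤ x
          · rw [Set.indicator_of_notMem
              (show w ∉ Icc 0 x from fun hm => h (sup_le hzx hm.2)), mul_zero]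
          · rw [Set.indicator_of_notMem (show z ∉ Icc 0 x from fun hm => hzx hm.2), zero_mul]
      rw [h2, integral_indicator measurableSet_Ici, setIntegral_const, smul_eq_mul, measureReal_def,
        hmIci (z ⊔ w) ⟨le_trans hz.1 le_sup_left, sup_le hz.2 hw.2⟩]
      by_cases hwz : w ≤ z
      · rw [sup_eq_left.2 hwz, Set.indicator_of_mem (show w ∈ Icc 0 z from ⟨hw.1, hwz⟩)]; ring
      · rw [sup_eq_right.2 (le_of_not_ge hwz),
          Set.indicator_of_notMem (show w ∉ Icc 0 z from fun hm => hwz hm.2)]; ring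
    have hintL : Integrable (fun w => fΔ z * (fΔ w - F w * fΔ w)) ρ :=
      (hIfΔ.sub hIF).const_mul _
    have hintR : Integrable (fun w => fΔ z * (Icc 0 z).indicator (fun w => (F z - F w) * fΔ w) w) ρ :=
      (hIKz z).const_mul _
    rw [integral_congr_ae hcong2, integral_sub hintL hintR, integral_const_mul,
      integral_const_mul, integral_sub hIfΔ hIF, ← hIdef, ← hJdef, hKL z]
  have keyII : (∫ x, H x ^ 2 ∂m) = I * (I - J) - D := by
    have hintL : Integrable (fun z => fΔ z * (I - J)) ρ := hIfΔ.mul_const _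
    rw [step1, integral_congr_ae step2, integral_sub hintL hD_int, integral_mul_const,
      ← hIdef, ← hDdef]
  have hHint : Integrable H m :=
    (integrable_const C).mono' hHSM.aestronglyMeasurable (ae_of_all _ hHb)
  have hH2int : Integrable (fun x => H x ^ 2) m := by
    have h1 : Integrable (fun x => H x * H x) m := by
      apply (integrable_const (C * C)).mono' (hHSM.mul hHSM).aestronglyMeasurable
      · refine ae_of_all _ fun x => ?_
        show ‖H x * H x‖ ≤ C * C
        rw [norm_mul]
        exact mul_le_mul (hHb x) (hHb x) (norm_nonneg _) hC0
    simpa only [← sq] using h1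
  have keyV : (∫ x, (bf + H x) ^ 2 ∂m) = bf ^ 2 + 2 * bf * (I - J) + (I * (I - J) - D) := by
    have hexp : ∀ x, (bf + H x) ^ 2 = bf ^ 2 + 2 * bf * H x + H x ^ 2 := fun x => by ring
    simp_rw [hexp]
    have hint1 : Integrable (fun x => (bf : ℝ) ^ 2) m := integrable_const _
    have hint2 : Integrable (fun x => 2 * bf * H x) m := hHint.const_mul _
    have hint3 : Integrable (fun x => bf ^ 2 + 2 * bf * H x) m := hint1.add hint2
    rw [integral_add hint3 hH2int, integral_add hint1 hint2, integral_const_mul,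
      integral_const, keyI, keyII, probReal_univ]
    simp
  have key6 : 0 ≤ f 0 * bf := aux_sign hα hfbc0
  have key7 : f 1 * (bf + I) ≤ 0 := by
    have h := aux_sign (a := f 1) (b := -(bf + I)) hβ (by linarith)
    nlinarith [h]
  have hsq : 0 ≤ ∫ x, (bf + H x) ^ 2 ∂m := integral_nonneg fun x => sq_nonneg _
  rw [keyA]
  have hids : f 0 * I + bf * J + D
      = f 1 * (bf + I) - f 0 * bf - (∫ x, (bf + H x) ^ 2 ∂m) := by
    rw [keyB, keyV]; ring
  rw [hids]
  linarith
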